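/- Let μ(x)=(ax+b)/(cx+d) be a refining Möbius map and α=(φ₀,φ₁,...) a stream of digits from {L,R,M}. Let X = max(1/|c+d|, 1/|d-c|) and n = ⌈6·|ad-bc|·X²⌉. Then diam(μ ∘ φ₀ ∘ ... ∘ φ_{n-1}) < 1/3, and consequently there exists a digit φ ∈ {L,R,M} such that (μ ∘ φ₀ ∘ ... ∘ φ_{n-1})([-1,1]) ⊆ φ([-1,1]). -/

import Mathlib

noncomputable def digitL : ℝ → ℝ := fun x => (x - 1) / (x + 3)
noncomputable def digitR : ℝ → ℝ := fun x => (x + 1) / (-x + 3)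
noncomputable def digitM : ℝ → ℝ := fun x => x / 3

noncomputable def compStream (α : ℕ → ℝ → ℝ) : ℕ → ℝ → ℝ
  | 0 => id
  | k + 1 => compStream α k ∘ α k

lemma denom_pos {r s x : ℝ} (he : 0 < r + s) (hf : 0 < s - r) (hx : -1 ≤ x) (hx' : x ≤ 1) :
    0 < r * x + s := by
  nlinarith [mul_nonneg (by linarith : (0:ℝ) ≤ 1 + x) he.le,
    mul_nonneg (by linarith : (0:ℝ) ≤ 1 - x) hf.le]

lemma digit_maps {φ : ℝ → ℝ} (h : φ = digitL ∨ φ = digitR ∨ φ = digitM)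
    {x : ℝ} (hx : x ∈ Set.Icc (-1:ℝ) 1) : φ x ∈ Set.Icc (-1:ℝ) 1 := by
  obtain ⟨h1, h2⟩ := hx
  rcases h with h | h | h <;> subst h
  · have h3 : (0:ℝ) < x + 3 := by linarith
    constructor
    · show -1 ≤ (x - 1) / (x + 3); rw [le_div_iff₀ h3]; linarith
    · show (x - 1) / (x + 3) ≤ 1; rw [div_le_iff₀ h3]; linarith
  · have h3 : (0:ℝ) < -x + 3 := by linarith
    constructor
    · show -1 ≤ (x + 1) / (-x + 3); rw [le_div_iff₀ h3]; linarith
    · show (x + 1) / (-x + 3) ≤ 1; rw [div_le_iff₀ h3]; linarith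
  · constructor
    · show -1 ≤ x / 3; rw [le_div_iff₀ (by norm_num : (0:ℝ) < 3)]; linarith
    · show x / 3 ≤ 1; rw [div_le_iff₀ (by norm_num : (0:ℝ) < 3)]; linarith

lemma compStream_mem (α : ℕ → ℝ → ℝ)
    (hα : ∀ i, α i = digitL ∨ α i = digitR ∨ α i = digitM) :
    ∀ n, ∀ x ∈ Set.Icc (-1:ℝ) 1, compStream α n x ∈ Set.Icc (-1:ℝ) 1 := by
  intro n
  induction n with
  | zero => intro x hx; simpa [compStream] using hx
  | succ n ih =>
    intro x hx
    have h : compStream α (n+1) x = compStream α n (α n x) := rfl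
    rw [h]
    exact ih _ (digit_maps (hα n) hx)

lemma compStream_repr (α : ℕ → ℝ → ℝ)
    (hα : ∀ i, α i = digitL ∨ α i = digitR ∨ α i = digitM) (n : ℕ) :
    ∃ p q r s : ℝ, 0 < r + s ∧ 0 < s - r ∧ 0 < p * s - q * r ∧
      p * s - q * r ≤ (r + s) ^ 2 ∧ p * s - q * r ≤ (s - r) ^ 2 ∧
      ((n : ℝ) + 1) * (p * s - q * r) ≤ (r + s) * (s - r) ∧
      ∀ x ∈ Set.Icc (-1 : ℝ) 1, compStream α n x = (p * x + q) / (r * x + s) := by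
  induction n with
  | zero =>
    refine ⟨1, 0, 0, 1, by norm_num, by norm_num, by norm_num, by norm_num, by norm_num,
      by norm_num, fun x hx => ?_⟩
    simp [compStream]
  | succ n ih =>
    obtain ⟨p, q, r, s, he, hf, hD, he2, hf2, hef, hform⟩ := ih
    have hn0 : (0:ℝ) ≤ (n:ℝ) := Nat.cast_nonneg n
    have hDef : p * s - q * r ≤ (r + s) * (s - r) := by nlinarith
    rcases hα n with h | h | h
    · -- digit L : new coeffs p+q, 3q-p, r+s, 3s-r
      refine ⟨p + q, 3*q - p, r + s, 3*s - r, by linarith, by linarith, by nlinarith,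
        by nlinarith, by nlinarith, by push_cast; nlinarith, fun x hx => ?_⟩
      obtain ⟨hx1, hx2⟩ := hx
      have hc : compStream α (n+1) x = compStream α n (α n x) := rfl
      have hLx : α n x ∈ Set.Icc (-1:ℝ) 1 := digit_maps (Or.inl h) ⟨hx1, hx2⟩
      rw [h] at hLx
      rw [hc, h, hform _ hLx]
      have h3 : (0:ℝ) < x + 3 := by linarith
      have hd1 : 0 < r * digitL x + s := denom_pos he hf hLx.1 hLx.2
      have hd2 : 0 < (r + s) * x + (3*s - r) :=
        denom_pos (by linarith) (by linarith) hx1 hx2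
      simp only [digitL] at hd1 ⊢
      rw [div_eq_div_iff hd1.ne' hd2.ne']
      field_simp
      ring
    · refine ⟨p - q, p + 3*q, r - s, r + 3*s, by linarith, by linarith, by nlinarith,
        by nlinarith, by nlinarith, by push_cast; nlinarith, fun x hx => ?_⟩
      obtain ⟨hx1, hx2⟩ := hx
      have hc : compStream α (n+1) x = compStream α n (α n x) := rfl
      have hLx : α n x ∈ Set.Icc (-1:ℝ) 1 := digit_maps (Or.inr (Or.inl h)) ⟨hx1, hx2⟩
      rw [h] at hLx
      rw [hc, h, hform _ hLx]
      have h3 : (0:ℝ) < -x + 3 := by linarith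
      have hd1 : 0 < r * digitR x + s := denom_pos he hf hLx.1 hLx.2
      have hd2 : 0 < (r - s) * x + (r + 3*s) :=
        denom_pos (by linarith) (by linarith) hx1 hx2
      simp only [digitR] at hd1 ⊢
      rw [div_eq_div_iff hd1.ne' hd2.ne']
      field_simp
      ring
    · refine ⟨p, 3*q, r, 3*s, by linarith, by linarith, by nlinarith,
        by nlinarith, by nlinarith, by push_cast; nlinarith, fun x hx => ?_⟩
      obtain ⟨hx1, hx2⟩ := hx
      have hc : compStream α (n+1) x = compStream α n (α n x) := rfl
      have hLx : α n x ∈ Set.Icc (-1:ℝ) 1 := digit_maps (Or.inr (Or.inr h)) ⟨hx1, hx2⟩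
      rw [h] at hLx
      rw [hc, h, hform _ hLx]
      have hd1 : 0 < r * digitM x + s := denom_pos he hf hLx.1 hLx.2
      have hd2 : 0 < r * x + 3*s := denom_pos (r := r) (s := 3*s) (by linarith) (by linarith) hx1 hx2
      simp only [digitM] at hd1 ⊢
      rw [div_eq_div_iff hd1.ne' hd2.ne']
      field_simp

lemma no_mixed {c d : ℝ} (hb : ∀ x ∈ Set.Icc (-1 : ℝ) 1, c * x + d ≠ 0)
    (h1 : 0 < c + d) (h2 : d - c < 0) : False := by
  have hc : 0 < c := by linarith
  apply hb (-d / c) ⟨by rw [le_div_iff₀ hc]; linarith, by rw [div_le_iff₀ hc]; linarith⟩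
  field_simp
  ring

lemma sign_cases {c d : ℝ} (hb : ∀ x ∈ Set.Icc (-1 : ℝ) 1, c * x + d ≠ 0) :
    (0 < c + d ∧ 0 < d - c) ∨ (c + d < 0 ∧ d - c < 0) := by
  have h1 : c + d ≠ 0 := by
    have := hb 1 ⟨by norm_num, le_refl 1⟩; intro h; apply this; linarith
  have h2 : d - c ≠ 0 := by
    have := hb (-1) ⟨le_refl _, by norm_num⟩; intro h; apply this; linarith
  rcases h1.lt_or_gt with ha | ha <;> rcases h2.lt_or_gt with hd' | hd'
  · exact Or.inr ⟨ha, hd'⟩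
  · exfalso
    exact no_mixed (c := -c) (d := -d)
      (fun x hx hh => hb x hx (by linarith [hh])) (by linarith) (by linarith)
  · exact absurd hd' (by intro h; exact no_mixed hb ha h |>.elim)
  · exact Or.inl ⟨ha, hd'⟩

lemma mobius_between {a b c d l y u : ℝ}
    (h1 : 0 < c * l + d) (h2 : 0 < c * y + d) (h3 : 0 < c * u + d)
    (hly : l ≤ y) (hyu : y ≤ u) :
    min ((a*l+b)/(c*l+d)) ((a*u+b)/(c*u+d)) ≤ (a*y+b)/(c*y+d) ∧
    (a*y+b)/(c*y+d) ≤ max ((a*l+b)/(c*l+d)) ((a*u+b)/(c*u+d)) := by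
  rcases le_or_gt 0 (a*d - b*c) with hD | hD
  · have hl : (a*l+b)/(c*l+d) ≤ (a*y+b)/(c*y+d) := by
      rw [div_le_div_iff₀ h1 h2]; nlinarith [mul_nonneg hD (by linarith : (0:ℝ) ≤ y - l)]
    have hu : (a*y+b)/(c*y+d) ≤ (a*u+b)/(c*u+d) := by
      rw [div_le_div_iff₀ h2 h3]; nlinarith [mul_nonneg hD (by linarith : (0:ℝ) ≤ u - y)]
    exact ⟨le_trans (min_le_left _ _) hl, le_trans hu (le_max_right _ _)⟩
  · have hl : (a*y+b)/(c*y+d) ≤ (a*l+b)/(c*l+d) := by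
      rw [div_le_div_iff₀ h2 h1]; nlinarith [mul_nonneg (by linarith : (0:ℝ) ≤ b*c - a*d) (by linarith : (0:ℝ) ≤ y - l)]
    have hu : (a*u+b)/(c*u+d) ≤ (a*y+b)/(c*y+d) := by
      rw [div_le_div_iff₀ h3 h2]
      nlinarith [mul_nonneg (by linarith : (0:ℝ) ≤ b*c - a*d) (by linarith : (0:ℝ) ≤ u - y)]
    exact ⟨le_trans (min_le_right _ _) hu, le_trans hl (le_max_left _ _)⟩

lemma mem_L_image {y : ℝ} (h1 : -1 ≤ y) (h2 : y ≤ 0) : y ∈ digitL '' Set.Icc (-1:ℝ) 1 := by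
  have hy : 0 < 1 - y := by linarith
  refine ⟨(1+3*y)/(1-y), ⟨?_, ?_⟩, ?_⟩
  · rw [le_div_iff₀ hy]; linarith
  · rw [div_le_one hy]; linarith
  · have h4 : (1+3*y)/(1-y) + 3 = 4/(1-y) := by field_simp; ring
    simp only [digitL]
    rw [h4, div_eq_iff (by positivity : (4:ℝ)/(1-y) ≠ 0)]
    field_simp
    ring
  
lemma mem_R_image {y : ℝ} (h1 : 0 ≤ y) (h2 : y ≤ 1) : y ∈ digitR '' Set.Icc (-1:ℝ) 1 := by
  have hy : 0 < 1 + y := by linarith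
  refine ⟨(3*y-1)/(1+y), ⟨?_, ?_⟩, ?_⟩
  · rw [le_div_iff₀ hy]; linarith
  · rw [div_le_one hy]; linarith
  · have h4 : -((3*y-1)/(1+y)) + 3 = 4/(1+y) := by field_simp; ring
    simp only [digitR]
    rw [h4, div_eq_iff (by positivity : (4:ℝ)/(1+y) ≠ 0)]
    field_simp
    ring

lemma mem_M_image {y : ℝ} (h1 : -(1/3) ≤ y) (h2 : y ≤ 1/3) : y ∈ digitM '' Set.Icc (-1:ℝ) 1 := by
  refine ⟨3*y, ⟨by linarith, by linarith⟩, ?_⟩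
  simp only [digitM]
  ring

set_option maxHeartbeats 1000000 in
lemma main_pos (a b c d : ℝ) (m : ℝ → ℝ)
    (hm' : ∀ x ∈ Set.Icc (-1:ℝ) 1, m x = (a*x+b)/(c*x+d))
    (hcd : 0 < c + d) (hdc : 0 < d - c)
    (hr : ∀ x ∈ Set.Icc (-1:ℝ) 1, m x ∈ Set.Icc (-1:ℝ) 1)
    (α : ℕ → ℝ → ℝ) (hα : ∀ i, α i = digitL ∨ α i = digitR ∨ α i = digitM)
    (X : ℝ) (hX : X = max (1/|c+d|) (1/|d-c|))
    (n : ℕ) (hn : 6 * |a*d - b*c| * X^2 ≤ (n:ℝ)) :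
    |m (compStream α n (-1)) - m (compStream α n 1)| < 1 / 3 ∧
      ∃ φ ∈ ({digitL, digitR, digitM} : Set (ℝ → ℝ)),
        ∀ x ∈ Set.Icc (-1:ℝ) 1, m (compStream α n x) ∈ φ '' Set.Icc (-1:ℝ) 1 := by
  have hone : (-1:ℝ) ∈ Set.Icc (-1:ℝ) 1 := ⟨le_refl _, by norm_num⟩
  have hone' : (1:ℝ) ∈ Set.Icc (-1:ℝ) 1 := ⟨by norm_num, le_refl _⟩
  obtain ⟨p, q, r, s, he, hf, hD, he2, hf2, hef, hform⟩ := compStream_repr α hα n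
  set l := compStream α n (-1) with hldef
  set u := compStream α n 1 with hudef
  clear_value l u
  have hlmem : l ∈ Set.Icc (-1:ℝ) 1 := by rw [hldef]; exact compStream_mem α hα n (-1) hone
  have humem : u ∈ Set.Icc (-1:ℝ) 1 := by rw [hudef]; exact compStream_mem α hα n 1 hone'
  have hlval : l = (q - p) / (s - r) := by
    rw [hldef]
    have h := hform (-1) hone
    rw [show p * (-1) + q = q - p by ring, show r * (-1) + s = s - r by ring] at h
    exact h
  have huval : u = (p + q) / (r + s) := by
    rw [hudef]
    have h := hform 1 hone'
    rw [show p * 1 + q = p + q by ring, show r * 1 + s = r + s by ring] at h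
    exact h
  -- X facts
  have hXcd : 1 / |c + d| ≤ X := hX ▸ le_max_left _ _
  have hXdc : 1 / |d - c| ≤ X := hX ▸ le_max_right _ _
  rw [abs_of_pos hcd] at hXcd
  rw [abs_of_pos hdc] at hXdc
  have hXpos : 0 < X := lt_of_lt_of_le (by positivity) hXcd
  have hX1 : 1 ≤ X * (c + d) := by rw [div_le_iff₀ hcd] at hXcd; linarith
  have hX2 : 1 ≤ X * (d - c) := by rw [div_le_iff₀ hdc] at hXdc; linarith
  have hdp : ∀ x ∈ Set.Icc (-1:ℝ) 1, 0 < c * x + d := fun x hx =>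
    denom_pos (r := c) (s := d) hcd hdc hx.1 hx.2
  have hXd : ∀ x ∈ Set.Icc (-1:ℝ) 1, 1 ≤ X * (c * x + d) := by
    intro x hx
    nlinarith [mul_nonneg (by linarith [hx.1] : (0:ℝ) ≤ 1 + x) (by linarith : (0:ℝ) ≤ X*(c+d) - 1),
      mul_nonneg (by linarith [hx.2] : (0:ℝ) ≤ 1 - x) (by linarith : (0:ℝ) ≤ X*(d-c) - 1)]
  -- interval facts
  have hul : l ≤ u := by
    rw [hlval, huval, div_le_div_iff₀ hf he]
    nlinarith
  have hud : u - l = (2 * (p * s - q * r)) / ((r + s) * (s - r)) := by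
    rw [hlval, huval, div_sub_div _ _ he.ne' hf.ne']
    congr 1
    ring
  have hdiff : u - l ≤ 2 / ((n:ℝ) + 1) := by
    rw [hud, div_le_div_iff₀ (mul_pos he hf) (by positivity)]
    nlinarith
  have hDu : 0 < c * u + d := hdp u humem
  have hDl : 0 < c * l + d := hdp l hlmem
  have hmdiff : m u - m l = (a*d - b*c) * (u - l) / ((c*u+d) * (c*l+d)) := by
    rw [hm' u humem, hm' l hlmem, div_sub_div _ _ hDu.ne' hDl.ne']
    congr 1
    ring
  have habs : |m u - m l| = |a*d - b*c| * (u - l) / ((c*u+d) * (c*l+d)) := by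
    rw [hmdiff, abs_div, abs_mul, abs_of_nonneg (by linarith : (0:ℝ) ≤ u - l),
      abs_of_pos (mul_pos hDu hDl)]
  have hbound : |m u - m l| ≤ |a*d - b*c| * X^2 * (u - l) := by
    have h1 := hXd u humem
    have h2 := hXd l hlmem
    have hXX : 1 ≤ X^2 * ((c*u+d) * (c*l+d)) := by
      have h3 := mul_le_mul h1 h2 (by norm_num) (by positivity)
      nlinarith
    have hN0 : (0:ℝ) ≤ |a*d - b*c| * (u - l) :=
      mul_nonneg (abs_nonneg _) (by linarith)
    rw [habs, div_le_iff₀ (mul_pos hDu hDl)]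
    have h4 := mul_nonneg hN0 (by linarith : (0:ℝ) ≤ X^2 * ((c*u+d) * (c*l+d)) - 1)
    linarith [h4, hN0]
  have hKfin : |a*d - b*c| * X^2 * (u - l) < 1/3 := by
    have hK0 : (0:ℝ) ≤ |a*d - b*c| * X^2 := by positivity
    have hstep : |a*d - b*c| * X^2 * (u - l) ≤ |a*d - b*c| * X^2 * (2 / ((n:ℝ)+1)) :=
      mul_le_mul_of_nonneg_left hdiff hK0
    have hlast : |a*d - b*c| * X^2 * (2 / ((n:ℝ)+1)) < 1/3 := by
      rw [show |a*d - b*c| * X^2 * (2 / ((n:ℝ)+1)) = (2 * (|a*d - b*c| * X^2)) / ((n:ℝ)+1) by ring,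
        div_lt_iff₀ (by positivity)]
      linarith
    linarith
  have hdiam : |m u - m l| < 1/3 := lt_of_le_of_lt hbound hKfin
  refine ⟨by rw [abs_sub_comm]; exact hdiam, ?_⟩
  -- betweenness
  have key : ∀ x ∈ Set.Icc (-1:ℝ) 1,
      min (m l) (m u) ≤ m (compStream α n x) ∧
      m (compStream α n x) ≤ max (m l) (m u) := by
    intro x hx
    set y := compStream α n x with hydef
    clear_value y
    have hymem : y ∈ Set.Icc (-1:ℝ) 1 := by rw [hydef]; exact compStream_mem α hα n x hx
    have hyval : y = (p * x + q) / (r * x + s) := by rw [hydef]; exact hform x hx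
    have hdx : 0 < r * x + s := denom_pos he hf hx.1 hx.2
    have hly : l ≤ y := by
      rw [hlval, hyval, div_le_div_iff₀ hf hdx]
      nlinarith [mul_nonneg hD.le (by linarith [hx.1] : (0:ℝ) ≤ x + 1)]
    have hyu : y ≤ u := by
      rw [hyval, huval, div_le_div_iff₀ hdx he]
      nlinarith [mul_nonneg hD.le (by linarith [hx.2] : (0:ℝ) ≤ 1 - x)]
    have hbet := mobius_between (a := a) (b := b) (hdp l hlmem) (hdp y hymem) (hdp u humem) hly hyu
    rw [hm' l hlmem, hm' u humem, hm' y hymem]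
    exact hbet
  have hmlm := hr l hlmem
  have hmum := hr u humem
  have hA1 : -1 ≤ min (m l) (m u) := le_min hmlm.1 hmum.1
  have hB1 : max (m l) (m u) ≤ 1 := max_le hmlm.2 hmum.2
  have hBA : max (m l) (m u) - min (m l) (m u) < 1/3 := by
    rw [max_sub_min_eq_abs]
    first
    | exact hdiam
    | · rw [abs_sub_comm]
        exact hdiam
  rcases le_or_gt (max (m l) (m u)) 0 with hc0 | hc0
  · refine ⟨digitL, by simp, fun x hx => ?_⟩
    obtain ⟨k1, k2⟩ := key x hx
    exact mem_L_image (by linarith) (by linarith)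
  · rcases le_or_gt (max (m l) (m u)) (1/3) with hc1 | hc1
    · refine ⟨digitM, by simp, fun x hx => ?_⟩
      obtain ⟨k1, k2⟩ := key x hx
      exact mem_M_image (by linarith) (by linarith)
    · refine ⟨digitR, by simp, fun x hx => ?_⟩
      obtain ⟨k1, k2⟩ := key x hx
      exact mem_R_image (by linarith) (by linarith)


theorem explicit_bound_emits (a b c d : ℝ) (m : ℝ → ℝ)
    (hm : m = fun x => (a * x + b) / (c * x + d))
    (hb : ∀ x ∈ Set.Icc (-1 : ℝ) 1, c * x + d ≠ 0)
    (hr : ∀ x ∈ Set.Icc (-1 : ℝ) 1, m x ∈ Set.Icc (-1 : ℝ) 1)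
    (α : ℕ → ℝ → ℝ)
    (hα : ∀ i, α i = digitL ∨ α i = digitR ∨ α i = digitM)
    (X : ℝ) (hX : X = max (1 / |c + d|) (1 / |d - c|))
    (n : ℕ) (hn : n = ⌈6 * |a * d - b * c| * X ^ 2⌉₊) :
    |m (compStream α n (-1)) - m (compStream α n 1)| < 1 / 3 ∧
      ∃ φ ∈ ({digitL, digitR, digitM} : Set (ℝ → ℝ)),
        ∀ x ∈ Set.Icc (-1 : ℝ) 1, m (compStream α n x) ∈ φ '' Set.Icc (-1 : ℝ) 1 := by
  have hn' : 6 * |a * d - b * c| * X ^ 2 ≤ (n : ℝ) := by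
    rw [hn]; exact Nat.le_ceil _
  rcases sign_cases hb with ⟨h1, h2⟩ | ⟨h1, h2⟩
  · exact main_pos a b c d m (fun x hx => by rw [hm]) h1 h2 hr α hα X hX n hn'
  · refine main_pos (-a) (-b) (-c) (-d) m ?_ (by linarith) (by linarith) hr α hα X ?_ n ?_
    · intro x hx
      rw [hm]
      show (a * x + b) / (c * x + d) = _
      rw [show (-a) * x + -b = -(a * x + b) by ring,
        show (-c) * x + -d = -(c * x + d) by ring, neg_div_neg_eq]
    · rw [hX]
      rw [show -c + -d = -(c + d) by ring, show -d - -c = -(d - c) by ring, abs_neg, abs_neg]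
    · rw [show (-a) * (-d) - (-b) * (-c) = a * d - b * c by ring]
      exact hn'
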